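/- Let L₉ be the 3-dimensional complex algebra with basis e₁, e₂, e₃ and nonzero products e₁e₃ = e₁ + e₂, e₃e₃ = e₁. For a single variable (m = 1), every polynomial function f : L₉ → ℂ invariant under all automorphisms of L₉ is a polynomial in the third coordinate z (with respect to the basis e₁,e₂,e₃); that is, the invariant algebra I₁(L₉) = ℂ[x,y,z]^{Aut(L₉)} equals ℂ[z]. -/

import Mathlib

/-- Multiplication of `L₉` on `ℂ³`: nonzero products `e₁e₃ = e₁ + e₂`, `e₃e₃ = e₁`. -/
def mulL9 (a b : Fin 3 → ℂ) : Fin 3 → ℂ :=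
  ![(a 0 + a 2) * b 2, a 0 * b 2, 0]

/-- The automorphism of `L₉` with parameters `α`, `β` (needs `1 + α ≠ 0`). -/
def gmap (α β : ℂ) : (Fin 3 → ℂ) →ₗ[ℂ] (Fin 3 → ℂ) where
  toFun a := ![(1 + α) * a 0 + α * a 2, α * a 0 + a 1 + β * a 2, a 2]
  map_add' a b := by
    funext i; fin_cases i <;> simp <;> ring
  map_smul' c a := by
    funext i; fin_cases i <;> simp <;> ring

lemma gmap_apply (α β : ℂ) (a : Fin 3 → ℂ) :
    gmap α β a = ![(1 + α) * a 0 + α * a 2, α * a 0 + a 1 + β * a 2, a 2] := rfl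

lemma gmap_bijective (α β : ℂ) (hα : 1 + α ≠ 0) : Function.Bijective (gmap α β) := by
  have hleft : Function.LeftInverse
      (fun b : Fin 3 → ℂ => ![(b 0 - α * b 2) / (1 + α),
        b 1 - α * ((b 0 - α * b 2) / (1 + α)) - β * b 2, b 2]) (gmap α β) := by
    intro a; funext i; fin_cases i <;> simp [gmap_apply] <;> field_simp <;> ring
  have hright : Function.RightInverse
      (fun b : Fin 3 → ℂ => ![(b 0 - α * b 2) / (1 + α),
        b 1 - α * ((b 0 - α * b 2) / (1 + α)) - β * b 2, b 2]) (gmap α β) := by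
    intro b; funext i; fin_cases i <;> simp [gmap_apply] <;> field_simp <;> ring
  exact ⟨hleft.injective, hright.surjective⟩

lemma gmap_mul (α β : ℂ) (x y : Fin 3 → ℂ) :
    gmap α β (mulL9 x y) = mulL9 (gmap α β x) (gmap α β y) := by
  funext i; fin_cases i <;> simp [gmap_apply, mulL9] <;> ring

lemma eval_aeval_X2 (q : Polynomial ℂ) (a : Fin 3 → ℂ) :
    MvPolynomial.eval a (Polynomial.aeval (MvPolynomial.X 2 : MvPolynomial (Fin 3) ℂ) q)
    = Polynomial.eval (a 2) q := by
  simp [Polynomial.aeval_def, Polynomial.eval₂_eq_sum, Polynomial.eval_eq_sum, Polynomial.sum]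

lemma peval_aeval (f : MvPolynomial (Fin 3) ℂ) (v : Fin 3 → Polynomial ℂ) (t : ℂ) :
    Polynomial.eval t (MvPolynomial.aeval v f)
    = MvPolynomial.eval (fun i => Polynomial.eval t (v i)) f := by
  induction f using MvPolynomial.induction_on with
  | C c => simp
  | add p q hp hq => simp [hp, hq]
  | mul_X p i hp => simp [hp]

/-- For `m = 1`, a polynomial function on `L₉` (with coordinates `x = X 0`, `y = X 1`,
`z = X 2` w.r.t. the basis `(e₁,e₂,e₃)`) is invariant under all automorphisms of `L₉`
iff it is a polynomial in the third coordinate `z`; i.e. `I₁(L₉) = ℂ[z]`. -/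
theorem L9_invariants_one_variable (f : MvPolynomial (Fin 3) ℂ) :
    (∀ g : (Fin 3 → ℂ) →ₗ[ℂ] (Fin 3 → ℂ),
        Function.Bijective g →
        (∀ x y : Fin 3 → ℂ, g (mulL9 x y) = mulL9 (g x) (g y)) →
        ∀ a : Fin 3 → ℂ, MvPolynomial.eval (g a) f = MvPolynomial.eval a f) ↔
    ∃ q : Polynomial ℂ, f = Polynomial.aeval (MvPolynomial.X 2 : MvPolynomial (Fin 3) ℂ) q := by
  constructor
  · intro h
    set q : Polynomial ℂ := MvPolynomial.aeval ![0, 0, Polynomial.X] f with hq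
    refine ⟨q, ?_⟩
    -- key : for every point, eval a f = q.eval (a 2)
    have hqeval : ∀ t : ℂ, Polynomial.eval t q = MvPolynomial.eval ![0, 0, t] f := by
      intro t
      rw [hq, peval_aeval]
      have hv : (fun i => Polynomial.eval t (![0, 0, Polynomial.X] i)) = ![(0:ℂ), 0, t] := by
        funext i; fin_cases i <;> simp
      rw [hv]
    have key : ∀ a : Fin 3 → ℂ, a 2 ≠ 0 → a 0 + a 2 ≠ 0 →
        MvPolynomial.eval a f = MvPolynomial.eval ![0, 0, a 2] f := by
      intro a h2 h02
      have hα : (1 : ℂ) + a 0 / a 2 ≠ 0 := by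
        field_simp
        intro hc
        exact h02 (by linear_combination (div_eq_zero_iff.mp hc).resolve_right h2)
      have := h (gmap (a 0 / a 2) (a 1 / a 2)) (gmap_bijective _ _ hα)
        (gmap_mul _ _) ![0, 0, a 2]
      have hg : gmap (a 0 / a 2) (a 1 / a 2) ![0, 0, a 2] = a := by
        funext i; fin_cases i <;> simp [gmap_apply] <;> field_simp
      rw [hg] at this
      exact this
    -- the difference times X2*(X0+X2) vanishes everywhere
    set F : MvPolynomial (Fin 3) ℂ :=
      f - Polynomial.aeval (MvPolynomial.X 2 : MvPolynomial (Fin 3) ℂ) q with hF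
    set G : MvPolynomial (Fin 3) ℂ :=
      MvPolynomial.X 2 * (MvPolynomial.X 0 + MvPolynomial.X 2) with hG
    have hFG : F * G = 0 := by
      apply MvPolynomial.funext
      intro a
      by_cases h2 : a 2 = 0
      · simp [hF, hG, h2]
      by_cases h02 : a 0 + a 2 = 0
      · simp [hF, hG, h02]
      have hFa : MvPolynomial.eval a F = 0 := by
        rw [hF]
        simp only [map_sub, eval_aeval_X2, hqeval]
        rw [key a h2 h02]
        ring
      simp [hFa]
    have hGne : G ≠ 0 := by
      intro hc
      have := congrArg (MvPolynomial.eval ![(1 : ℂ), 0, 1]) hc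
      simp [hG] at this
    have hF0 : F = 0 := by
      rcases mul_eq_zero.mp hFG with h | h
      · exact h
      · exact absurd h hGne
    have := sub_eq_zero.mp (hF ▸ hF0)
    exact this
  · rintro ⟨q, rfl⟩ g hbij hmul a
    -- show the third coordinate is preserved
    set e0 : Fin 3 → ℂ := ![1, 0, 0] with he0
    set e1 : Fin 3 → ℂ := ![0, 1, 0] with he1
    set e2 : Fin 3 → ℂ := ![0, 0, 1] with he2
    set v0 := g e0 with hv0
    set v1 := g e1 with hv1
    set v2 := g e2 with hv2
    have hm1 : mulL9 e2 e2 = e0 := by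
      funext i; fin_cases i <;> simp [mulL9, he0, he2]
    have hv00 : v0 = mulL9 v2 v2 := by rw [hv0, ← hm1, hmul]
    have hv0_2 : v0 2 = 0 := by rw [hv00]; simp [mulL9]
    have hm2 : mulL9 e0 e2 = e0 + e1 := by
      funext i; fin_cases i <;> simp [mulL9, he0, he1, he2]
    have hsum : v0 + v1 = mulL9 v0 v2 := by
      rw [hv0, hv1, ← map_add, ← hm2, hmul]
    have hv1_2 : v1 2 = 0 := by
      have := congrFun hsum 2
      simp [mulL9, hv0_2] at this
      simpa [hv0_2] using this
    have hrep : ∀ b : Fin 3 → ℂ, b = b 0 • e0 + b 1 • e1 + b 2 • e2 := by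
      intro b; funext i; fin_cases i <;> simp [he0, he1, he2]
    have hcoord : ∀ b : Fin 3 → ℂ, (g b) 2 = b 2 * v2 2 := by
      intro b
      conv_lhs => rw [hrep b]
      simp only [map_add, map_smul, hv0.symm, hv1.symm, hv2.symm]
      simp [hv0_2, hv1_2]
    have hw2 : v2 2 ≠ 0 := by
      obtain ⟨b, hb⟩ := hbij.2 e2
      have := congrFun hb 2
      rw [hcoord b] at this
      simp [he2] at this
      intro hc
      rw [hc, mul_zero] at this
      exact one_ne_zero this.symm
    have hm3 : mulL9 e1 e2 = 0 := by
      funext i; fin_cases i <;> simp [mulL9, he1, he2]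
    have hv1_0 : v1 0 = 0 := by
      have : (0 : Fin 3 → ℂ) = mulL9 v1 v2 := by
        rw [hv1, hv2, ← hmul, hm3, map_zero]
      have h0 := congrFun this 1
      simp [mulL9] at h0
      rcases h0 with h | h
      · exact h
      · exact absurd h hw2
    have hkey : v0 0 = v0 0 * v2 2 := by
      have := congrFun hsum 0
      simp [mulL9, hv0_2, hv1_0] at this
      exact this
    have hne : v0 0 ≠ 0 := by
      intro h0
      have hw : g (v1 1 • e0 - v0 1 • e1) = 0 := by
        rw [map_sub, map_smul, map_smul, ← hv0, ← hv1]
        funext i; fin_cases i <;> simp [h0, hv1_0, hv0_2, hv1_2, mul_comm]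
      have hw0 : v1 1 • e0 - v0 1 • e1 = 0 := hbij.1 (by rw [hw, map_zero])
      have h11 : v1 1 = 0 := by
        have := congrFun hw0 0; simpa [he0, he1] using this
      have h01 : v0 1 = 0 := by
        have := congrFun hw0 1; simpa [he0, he1] using this
      have hv0z : v0 = 0 := by
        funext i; fin_cases i <;> simp [h0, h01, hv0_2]
      have he0z : e0 = 0 := hbij.1 (by rw [← hv0, hv0z, map_zero])
      have := congrFun he0z 0
      simp [he0] at this
    have hv22 : v2 2 = 1 :=
      (mul_left_cancel₀ hne (by rw [mul_one]; exact hkey)).symm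
    rw [eval_aeval_X2, eval_aeval_X2, hcoord a, hv22, mul_one]
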